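/- Let k be a field of characteristic 0 and V a 2-dimensional k-vector space. Let w ∈ V^{⊗4} satisfy φ(w) = w, where φ is the 4-cycle acting by φ(v₁⊗v₂⊗v₃⊗v₄) = v₄⊗v₁⊗v₂⊗v₃. Then w ∈ Sym⁴V if and only if the component of w in (Alt²V)⊗(Alt²V) under the direct sum decomposition V^{⊗4} = (Sym²V ⊗ Sym²V) ⊕ (Sym²V ⊗ Alt²V) ⊕ (Alt²V ⊗ Sym²V) ⊕ (Alt²V ⊗ Alt²V) vanishes; equivalently, if and only if w ∈ (Sym²V ⊗ V ⊗ V) + (V ⊗ V ⊗ Sym²V) as subspaces of V^{⊗4}. -/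

import Mathlib

open scoped TensorProduct

/-- The action of a permutation `θ ∈ 𝔖_m` on `V^{⊗m}`. -/
noncomputable def permAction (k V : Type*) [CommRing k] [AddCommGroup V] [Module k V]
    {m : ℕ} (θ : Equiv.Perm (Fin m)) :
    (⨂[k] (_ : Fin m), V) ≃ₗ[k] (⨂[k] (_ : Fin m), V) :=
  PiTensorProduct.reindex k (fun _ : Fin m => V) θ.symm

/-- The 4-cycle `φ ∈ 𝔖₄` with `φ(v₁⊗v₂⊗v₃⊗v₄) = v₄⊗v₁⊗v₂⊗v₃`. -/
def cyclePerm4 : Equiv.Perm (Fin 4) := (finRotate 4)⁻¹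

section Aux

variable {k V : Type*} [Field k] [AddCommGroup V] [Module k V]

/-- basis tensors -/
noncomputable def auxT (b : Module.Basis (Fin 2) k V) (f : Fin 4 → Fin 2) : ⨂[k] (_ : Fin 4), V :=
  PiTensorProduct.tprod k (fun i => b (f i))

/-- coordinate functionals -/
noncomputable def auxL (b : Module.Basis (Fin 2) k V) (g : Fin 4 → Fin 2) :
    (⨂[k] (_ : Fin 4), V) →ₗ[k] k :=
  PiTensorProduct.lift
    ((MultilinearMap.mkPiAlgebra k (Fin 4) k).compLinearMap (fun i => b.coord (g i)))

theorem auxL_tprod (b : Module.Basis (Fin 2) k V) (g : Fin 4 → Fin 2) (v : Fin 4 → V) :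
    auxL b g (PiTensorProduct.tprod k v) = ∏ i, b.repr (v i) (g i) := by
  simp [auxL, PiTensorProduct.lift.tprod, MultilinearMap.compLinearMap_apply,
    MultilinearMap.mkPiAlgebra_apply, Module.Basis.coord_apply]

theorem auxL_T (b : Module.Basis (Fin 2) k V) (g f : Fin 4 → Fin 2) :
    auxL b g (auxT b f) = if f = g then 1 else 0 := by
  rw [auxT, auxL_tprod]
  by_cases h : f = g
  · subst h; simp
  · obtain ⟨i, hi⟩ := Function.ne_iff.mp h
    rw [if_neg h]
    refine Finset.prod_eq_zero (Finset.mem_univ i) ?_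
    simp [Module.Basis.repr_self_apply, hi]

theorem sum_auxL_T (b : Module.Basis (Fin 2) k V) (w : ⨂[k] (_ : Fin 4), V) :
    ∑ f : Fin 4 → Fin 2, auxL b f w • auxT b f = w := by
  induction w using PiTensorProduct.induction_on with
  | smul_tprod r v =>
      have hv : (PiTensorProduct.tprod k v : ⨂[k] (_ : Fin 4), V)
          = ∑ f : Fin 4 → Fin 2, (∏ i, b.repr (v i) (f i)) • auxT b f := by
        calc (PiTensorProduct.tprod k v : ⨂[k] (_ : Fin 4), V)
            = PiTensorProduct.tprod k (fun i => ∑ j : Fin 2, b.repr (v i) j • b j) := by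
              congr 1; funext i; rw [Module.Basis.sum_repr]
          _ = ∑ f : Fin 4 → Fin 2,
                PiTensorProduct.tprod k (fun i => b.repr (v i) (f i) • b (f i)) :=
              MultilinearMap.map_sum _ _
          _ = _ := by
              refine Finset.sum_congr rfl fun f _ => ?_
              rw [MultilinearMap.map_smul_univ]; rfl
      simp_rw [map_smul, auxL_tprod, smul_eq_mul, mul_smul, ← Finset.smul_sum]
      rw [← hv]
  | add x y hx hy =>
      simp_rw [map_add, add_smul, Finset.sum_add_distrib, hx, hy]

theorem perm_auxT (b : Module.Basis (Fin 2) k V) (θ : Equiv.Perm (Fin 4)) (f : Fin 4 → Fin 2) :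
    permAction k V θ (auxT b f) = auxT b (fun i => f (θ i)) := by
  simp [permAction, auxT, PiTensorProduct.reindex_tprod]

theorem auxL_perm (b : Module.Basis (Fin 2) k V) (θ : Equiv.Perm (Fin 4))
    (w : ⨂[k] (_ : Fin 4), V) (g : Fin 4 → Fin 2) :
    auxL b g (permAction k V θ w) = auxL b (fun i => g (θ⁻¹ i)) w := by
  conv_lhs => rw [← sum_auxL_T b w]
  rw [map_sum, map_sum]
  simp_rw [map_smul, perm_auxT, auxL_T, smul_eq_mul]
  rw [Finset.sum_eq_single (fun i => g (θ⁻¹ i))]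
  · rw [if_pos (by funext i; simp), mul_one]
  · intro f _ hf
    rw [if_neg, mul_zero]
    intro hcon
    apply hf
    funext i
    have := congrFun hcon (θ⁻¹ i)
    simpa using this
  · intro h; exact absurd (Finset.mem_univ _) h

end Aux

theorem auxCore {k : Type*} [Field k] [CharZero k] (c : (Fin 4 → Fin 2) → k)
    (h1 : ∀ f : Fin 4 → Fin 2, c (fun i => f (finRotate 4 i)) = c f)
    (h2 : ∀ f : Fin 4 → Fin 2,
      c f + c (fun i => f (Equiv.swap (0:Fin 4) 1 (Equiv.swap (2:Fin 4) 3 i)))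
        = c (fun i => f (Equiv.swap (0:Fin 4) 1 i)) + c (fun i => f (Equiv.swap (2:Fin 4) 3 i)))
    (θ : Equiv.Perm (Fin 4)) (f : Fin 4 → Fin 2) :
    c (fun i => f (θ i)) = c f := by
  have r0 : finRotate 4 (0 : Fin 4) = 1 := by decide
  have r1 : finRotate 4 (1 : Fin 4) = 2 := by decide
  have r2 : finRotate 4 (2 : Fin 4) = 3 := by decide
  have r3 : finRotate 4 (3 : Fin 4) = 0 := by decide
  have h1' : ∀ x0 x1 x2 x3 : Fin 2, c ![x1, x2, x3, x0] = c ![x0, x1, x2, x3] := by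
    intro x0 x1 x2 x3
    have e : (fun i => (![x0,x1,x2,x3] : Fin 4 → Fin 2) (finRotate 4 i)) = ![x1,x2,x3,x0] := by
      funext i
      fin_cases i <;> simp [r0, r1, r2, r3]
    rw [← e]; exact h1 ![x0,x1,x2,x3]
  have e_a : (fun i => (![1,0,1,0] : Fin 4 → Fin 2)
      (Equiv.swap (0:Fin 4) 1 (Equiv.swap (2:Fin 4) 3 i))) = ![0,1,0,1] := by decide
  have e_b : (fun i => (![1,0,1,0] : Fin 4 → Fin 2) (Equiv.swap (0:Fin 4) 1 i)) = ![0,1,1,0] := by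
    decide
  have e_c : (fun i => (![1,0,1,0] : Fin 4 → Fin 2) (Equiv.swap (2:Fin 4) 3 i)) = ![1,0,0,1] := by
    decide
  have h := h2 ![1,0,1,0]
  rw [e_a, e_b, e_c] at h
  have q1 : c ![0,1,0,1] = c ![1,0,1,0] := h1' 1 0 1 0
  have q2 : c ![1,0,0,1] = c ![1,1,0,0] := h1' 1 1 0 0
  have q3 : c ![0,0,1,1] = c ![1,0,0,1] := h1' 1 0 0 1
  have q4 : c ![0,1,1,0] = c ![0,0,1,1] := h1' 0 0 1 1
  have hkey : c ![1,0,1,0] = c ![1,1,0,0] := by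
    have h2a : (2:k) * c ![1,0,1,0] = 2 * c ![1,1,0,0] := by
      rw [q1, q4, q3, q2] at h; linear_combination h
    exact mul_left_cancel₀ two_ne_zero h2a
  have two : ∀ x : Fin 2, x = 0 ∨ x = 1 := by decide
  have c0 : ((0 : Fin 2) : ℕ) = 0 := rfl
  have c1 : ((1 : Fin 2) : ℕ) = 1 := rfl
  have L : ∀ x0 x1 x2 x3 : Fin 2,
      c ![x0, x1, x2, x3] = c (fun i => if (i : ℕ) < (x0:ℕ) + x1 + x2 + x3 then 1 else 0) := by
    intro x0 x1 x2 x3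
    rcases two x0 with h|h <;> subst h <;>
      rcases two x1 with h|h <;> subst h <;>
      rcases two x2 with h|h <;> subst h <;>
      rcases two x3 with h|h <;> subst h <;>
      simp only [c0, c1]
    · rw [show (fun i : Fin 4 => if (i:ℕ) < 0+0+0+0 then (1:Fin 2) else 0) = ![0,0,0,0] by decide]
    · rw [show (fun i : Fin 4 => if (i:ℕ) < 0+0+0+1 then (1:Fin 2) else 0) = ![1,0,0,0] by decide]
      exact h1' 1 0 0 0
    · rw [show (fun i : Fin 4 => if (i:ℕ) < 0+0+1+0 then (1:Fin 2) else 0) = ![1,0,0,0] by decide]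
      exact (h1' 0 0 0 1).trans (h1' 1 0 0 0)
    · rw [show (fun i : Fin 4 => if (i:ℕ) < 0+0+1+1 then (1:Fin 2) else 0) = ![1,1,0,0] by decide]
      exact q3.trans q2
    · rw [show (fun i : Fin 4 => if (i:ℕ) < 0+1+0+0 then (1:Fin 2) else 0) = ![1,0,0,0] by decide]
      exact (h1' 0 0 1 0).trans ((h1' 0 0 0 1).trans (h1' 1 0 0 0))
    · rw [show (fun i : Fin 4 => if (i:ℕ) < 0+1+0+1 then (1:Fin 2) else 0) = ![1,1,0,0] by decide]
      exact q1.trans hkey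
    · rw [show (fun i : Fin 4 => if (i:ℕ) < 0+1+1+0 then (1:Fin 2) else 0) = ![1,1,0,0] by decide]
      exact q4.trans (q3.trans q2)
    · rw [show (fun i : Fin 4 => if (i:ℕ) < 0+1+1+1 then (1:Fin 2) else 0) = ![1,1,1,0] by decide]
      exact (h1' 1 0 1 1).trans ((h1' 1 1 0 1).trans (h1' 1 1 1 0))
    · rw [show (fun i : Fin 4 => if (i:ℕ) < 1+0+0+0 then (1:Fin 2) else 0) = ![1,0,0,0] by decide]
    · rw [show (fun i : Fin 4 => if (i:ℕ) < 1+0+0+1 then (1:Fin 2) else 0) = ![1,1,0,0] by decide]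
      exact q2
    · rw [show (fun i : Fin 4 => if (i:ℕ) < 1+0+1+0 then (1:Fin 2) else 0) = ![1,1,0,0] by decide]
      exact hkey
    · rw [show (fun i : Fin 4 => if (i:ℕ) < 1+0+1+1 then (1:Fin 2) else 0) = ![1,1,1,0] by decide]
      exact (h1' 1 1 0 1).trans (h1' 1 1 1 0)
    · rw [show (fun i : Fin 4 => if (i:ℕ) < 1+1+0+0 then (1:Fin 2) else 0) = ![1,1,0,0] by decide]
    · rw [show (fun i : Fin 4 => if (i:ℕ) < 1+1+0+1 then (1:Fin 2) else 0) = ![1,1,1,0] by decide]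
      exact h1' 1 1 1 0
    · rw [show (fun i : Fin 4 => if (i:ℕ) < 1+1+1+0 then (1:Fin 2) else 0) = ![1,1,1,0] by decide]
    · rw [show (fun i : Fin 4 => if (i:ℕ) < 1+1+1+1 then (1:Fin 2) else 0) = ![1,1,1,1] by decide]
  have m1 : (fun i => f (θ i)) = ![f (θ 0), f (θ 1), f (θ 2), f (θ 3)] := by
    funext i; fin_cases i <;> rfl
  have m2 : f = ![f 0, f 1, f 2, f 3] := by funext i; fin_cases i <;> rfl
  rw [m1]
  conv_rhs => rw [m2]
  rw [L, L]
  have hsum : ((f (θ 0) : ℕ)) + f (θ 1) + f (θ 2) + f (θ 3)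
      = ((f 0 : ℕ)) + f 1 + f 2 + f 3 := by
    have := Equiv.sum_comp θ (fun i => ((f i : ℕ)))
    simpa [Fin.sum_univ_four] using this
  rw [hsum]

/-- for a 2-dimensional `V` over a field of characteristic 0 and
`w ∈ V^{⊗4}` with `φ(w) = w`, one has `w ∈ Sym⁴V` if and only if
`w ∈ (Sym²V ⊗ V ⊗ V) + (V ⊗ V ⊗ Sym²V)` (equivalently, the component of `w` in
`Alt²V ⊗ Alt²V` vanishes); here `Sym²V ⊗ V ⊗ V` (resp. `V ⊗ V ⊗ Sym²V`) is the
fixed subspace of the transposition of the first (resp. last) two tensor factors. -/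
theorem statement10 (k V : Type*) [Field k] [CharZero k]
    [AddCommGroup V] [Module k V] [FiniteDimensional k V]
    (hdim : Module.finrank k V = 2)
    (w : ⨂[k] (_ : Fin 4), V) (hw : permAction k V cyclePerm4 w = w) :
    (∀ θ : Equiv.Perm (Fin 4), permAction k V θ w = w) ↔
      (∃ u v : ⨂[k] (_ : Fin 4), V,
        permAction k V (Equiv.swap (0 : Fin 4) 1) u = u ∧
        permAction k V (Equiv.swap (2 : Fin 4) 3) v = v ∧
        w = u + v) := by
  classical
  constructor
  · intro hsym
    exact ⟨w, 0, hsym _, map_zero _, (add_zero w).symm⟩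
  · rintro ⟨u, v, hu, hv, rfl⟩
    intro θ
    set s : Equiv.Perm (Fin 4) := Equiv.swap (0 : Fin 4) 1 with hs
    set t : Equiv.Perm (Fin 4) := Equiv.swap (2 : Fin 4) 3 with ht
    set b : Module.Basis (Fin 2) k V := Module.finBasisOfFinrankEq k V hdim with hb
    set c : (Fin 4 → Fin 2) → k := fun f => auxL b f (u + v) with hc
    -- invariance of u under s in coordinates
    have hlamu : ∀ f : Fin 4 → Fin 2, auxL b (fun i => f (s i)) u = auxL b f u := by
      intro f
      have h := congrArg (fun z => auxL b f z) hu
      rw [auxL_perm] at h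
      have : (fun i => f (s⁻¹ i)) = fun i => f (s i) := by
        funext i; rw [hs, Equiv.swap_inv]
      rwa [this] at h
    have hlamv : ∀ f : Fin 4 → Fin 2, auxL b (fun i => f (t i)) v = auxL b f v := by
      intro f
      have h := congrArg (fun z => auxL b f z) hv
      rw [auxL_perm] at h
      have : (fun i => f (t⁻¹ i)) = fun i => f (t i) := by
        funext i; rw [ht, Equiv.swap_inv]
      rwa [this] at h
    -- hypothesis h1 : cyclic invariance
    have h1 : ∀ f : Fin 4 → Fin 2, c (fun i => f (finRotate 4 i)) = c f := by
      intro f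
      have h := congrArg (fun z => auxL b f z) hw
      rw [auxL_perm] at h
      have : (fun i => f (cyclePerm4⁻¹ i)) = fun i => f (finRotate 4 i) := by
        funext i; rw [cyclePerm4, inv_inv]
      rwa [this] at h
    -- hypothesis h2
    have e1 : ∀ i : Fin 4, s (t (s i)) = t i := by
      intro i; rw [hs, ht]; revert i; decide
    have e2 : ∀ i : Fin 4, s (t (t i)) = s i := by
      intro i; rw [hs, ht]; revert i; decide
    have h2 : ∀ f : Fin 4 → Fin 2,
        c f + c (fun i => f (s (t i)))
          = c (fun i => f (s i)) + c (fun i => f (t i)) := by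
      intro f
      simp only [hc, map_add]
      have hgu : auxL b (fun j => f (s (t j))) u = auxL b (fun i => f (t i)) u := by
        rw [← hlamu (fun j => f (s (t j)))]
        congr 1
      have hgv : auxL b (fun j => f (s (t j))) v = auxL b (fun i => f (s i)) v := by
        rw [← hlamv (fun j => f (s (t j)))]
        congr 1
      rw [hgu, hgv, hlamu f, hlamv f]
      ring
    -- conclude coordinates are θ-invariant
    have key : ∀ (σ : Equiv.Perm (Fin 4)) (g : Fin 4 → Fin 2),
        c (fun i => g (σ i)) = c g := fun σ g => auxCore c h1 h2 σ g
    -- reconstruct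
    have expand : permAction k V θ (u + v)
        = ∑ f : Fin 4 → Fin 2, c f • auxT b (fun i => f (θ i)) := by
      conv_lhs => rw [← sum_auxL_T b (u + v)]
      rw [map_sum]
      exact Finset.sum_congr rfl fun f _ => by rw [map_smul, perm_auxT]
    rw [expand]
    let e : (Fin 4 → Fin 2) ≃ (Fin 4 → Fin 2) :=
      Equiv.arrowCongr (θ : Fin 4 ≃ Fin 4) (Equiv.refl (Fin 2))
    have reidx := Equiv.sum_comp e (fun f => c f • auxT b (fun i => f (θ i)))
    rw [← reidx]
    have step : ∀ f : Fin 4 → Fin 2,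
        c (e f) • auxT b (fun i => (e f) (θ i)) = c f • auxT b f := by
      intro f
      have he : e f = fun i => f (θ.symm i) := rfl
      have h3 : (fun i => (e f) (θ i)) = f := by
        funext i; rw [he]; simp
      rw [h3, he]
      have : c (fun i => f (θ.symm i)) = c f := key θ⁻¹ f
      rw [this]
    rw [Finset.sum_congr rfl fun f _ => step f]
    exact sum_auxL_T b (u + v)
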